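/- Let Y be the number of isolated vertices of the Erdős–Rényi random graph G(n,p) with n ≥ 2 and p ∈ (0,1), with mean μ = n(1−p)^{n−1}, and let m(θ) = E(e^{θY}). Then for all θ < 0, m'(θ) ≥ μ (1 + 2θ) m(θ). -/

import Mathlib

open MeasureTheory ProbabilityTheory Real Finset

noncomputable section

namespace ErdosRenyiIsolated

/-- Index set for the potential edges of a graph on `Fin n`. -/
abbrev EdgeIdx (n : ℕ) := {e : Fin n × Fin n // e.1 < e.2}

/-- Adjacency relation of the random graph encoded by `ω` : `u` and `v` are adjacent
if the corresponding edge indicator is `true`. -/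
def adj {n : ℕ} (ω : EdgeIdx n → Bool) (u v : Fin n) : Prop :=
  if h : u < v then ω ⟨(u, v), h⟩ = true
  else if h' : v < u then ω ⟨(v, u), h'⟩ = true
  else False

instance {n : ℕ} (ω : EdgeIdx n → Bool) (u v : Fin n) : Decidable (adj ω u v) := by
  unfold adj
  split
  · exact inferInstance
  · split
    · exact inferInstance
    · exact inferInstance

/-- Degree of vertex `v` in the graph encoded by `ω`. -/
def deg {n : ℕ} (ω : EdgeIdx n → Bool) (v : Fin n) : ℕ :=
  (Finset.univ.filter fun w => adj ω v w).card

/-- The number of isolated vertices of the graph encoded by `ω`. -/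
def isolCount {n : ℕ} (ω : EdgeIdx n → Bool) : ℕ :=
  (Finset.univ.filter fun v => deg ω v = 0).card

/-- The Bernoulli(p) measure on `Bool`. -/
def bern (p : ℝ) : Measure Bool :=
  ENNReal.ofReal p • Measure.dirac true + ENNReal.ofReal (1 - p) • Measure.dirac false

instance (p : ℝ) : IsFiniteMeasure (bern p) := by
  constructor
  have h : bern p Set.univ ≤ ENNReal.ofReal p + ENNReal.ofReal (1 - p) := by
    simp [bern]
  exact lt_of_le_of_lt h (ENNReal.add_lt_top.mpr ⟨ENNReal.ofReal_lt_top, ENNReal.ofReal_lt_top⟩)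

/-- The Erdős–Rényi random graph measure `G(n,p)`: the edge indicators are i.i.d.
Bernoulli(p). -/
def gnp (n : ℕ) (p : ℝ) : Measure (EdgeIdx n → Bool) :=
  Measure.pi fun _ => bern p

/-- The Erdős–Rényi measure together with an independent uniformly chosen vertex. -/
def gnpV (n : ℕ) (p : ℝ) : Measure ((EdgeIdx n → Bool) × Fin n) :=
  (gnp n p).prod (uniformOn (Set.univ : Set (Fin n)))

/-- Adjacency in the graph obtained by deleting all edges incident to `v'`. -/
def adjDel {n : ℕ} (ω : EdgeIdx n → Bool) (v' u v : Fin n) : Prop :=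
  adj ω u v ∧ u ≠ v' ∧ v ≠ v'

instance {n : ℕ} (ω : EdgeIdx n → Bool) (v' u v : Fin n) : Decidable (adjDel ω v' u v) := by
  unfold adjDel; exact inferInstance

/-- Degree of `v` in the graph `ω` with all edges incident to `v'` deleted. -/
def degDel {n : ℕ} (ω : EdgeIdx n → Bool) (v' v : Fin n) : ℕ :=
  (Finset.univ.filter fun w => adjDel ω v' v w).card

/-- Number of isolated vertices in the graph `ω` with all edges incident to `v'` deleted. -/
def isolCountDel {n : ℕ} (ω : EdgeIdx n → Bool) (v' : Fin n) : ℕ :=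
  (Finset.univ.filter fun v => degDel ω v' v = 0).card

section Combinatorics

variable {n : ℕ}

lemma adj_comm (ω : EdgeIdx n → Bool) (u v : Fin n) : adj ω u v ↔ adj ω v u := by
  unfold adj
  rcases lt_trichotomy u v with h | h | h
  · rw [dif_pos h, dif_neg (asymm h), dif_pos h]
  · subst h; simp
  · rw [dif_neg (asymm h), dif_pos h, dif_pos h]

lemma deg_eq_zero_iff (ω : EdgeIdx n → Bool) (v : Fin n) :
    deg ω v = 0 ↔ ∀ w, ¬ adj ω v w := by
  simp [deg, Finset.card_eq_zero, Finset.filter_eq_empty_iff]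

lemma degDel_eq_zero_iff (ω : EdgeIdx n → Bool) {v' : Fin n} (h : deg ω v' = 0) (v : Fin n) :
    degDel ω v' v = 0 ↔ deg ω v = 0 := by
  have hadj : ∀ w, ¬ adj ω v' w := (deg_eq_zero_iff ω v').mp h
  by_cases hv : v = v'
  · subst hv
    simp only [degDel, adjDel, h, iff_true, Finset.card_eq_zero, Finset.filter_eq_empty_iff]
    exact Finset.eq_empty_of_forall_notMem fun w hw => (Finset.mem_filter.mp hw).2.2.1 rfl
  · unfold degDel deg
    have hset : (Finset.univ.filter fun w => adjDel ω v' v w)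
        = Finset.univ.filter fun w => adj ω v w := by
      apply Finset.filter_congr
      intro w _
      simp only [adjDel]
      constructor
      · exact fun hw => hw.1
      · intro hw
        refine ⟨hw, hv, ?_⟩
        intro hwv; subst hwv
        exact hadj v ((adj_comm ω v w).mp hw)
    rw [hset]

lemma isolCountDel_eq (ω : EdgeIdx n → Bool) {v' : Fin n} (h : deg ω v' = 0) :
    isolCountDel ω v' = isolCount ω := by
  unfold isolCountDel isolCount
  congr 1
  exact Finset.filter_congr fun v _ => by simpa using degDel_eq_zero_iff ω h v

/-- Number of neighbours of `v` of degree one. -/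
def Nv (ω : EdgeIdx n → Bool) (v : Fin n) : ℕ :=
  (Finset.univ.filter fun w => adj ω v w ∧ deg ω w = 1).card

lemma isolCountDel_le (ω : EdgeIdx n → Bool) (v : Fin n) :
    isolCountDel ω v ≤ isolCount ω + 1 + Nv ω v := by
  have hsub : (Finset.univ.filter fun u => degDel ω v u = 0) ⊆
      ((Finset.univ.filter fun u => deg ω u = 0) ∪ {v}) ∪
        (Finset.univ.filter fun w => adj ω v w ∧ deg ω w = 1) := by
    intro u hu
    simp only [Finset.mem_filter, Finset.mem_univ, true_and] at hu
    simp only [Finset.mem_union, Finset.mem_filter, Finset.mem_univ, true_and,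
      Finset.mem_singleton]
    by_cases h0 : deg ω u = 0
    · exact Or.inl (Or.inl h0)
    by_cases huv : u = v
    · exact Or.inl (Or.inr huv)
    right
    have hdel : ∀ w, ¬ (adj ω u w ∧ u ≠ v ∧ w ≠ v) := by
      intro w
      have := (Finset.card_eq_zero.mp hu)
      intro hw
      have : w ∈ (Finset.univ.filter fun w => adjDel ω v u w) := by
        simp [adjDel, hw.1, hw.2.1, hw.2.2]
      rw [degDel] at hu
      rw [Finset.card_eq_zero.mp hu] at this
      exact absurd this (Finset.notMem_empty w)
    have hav : ∀ w, adj ω u w → w = v := by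
      intro w hw
      by_contra hwv
      exact hdel w ⟨hw, huv, hwv⟩
    obtain ⟨w, hw⟩ : ∃ w, adj ω u w := by
      by_contra hno
      push_neg at hno
      exact h0 ((deg_eq_zero_iff ω u).mpr hno)
    have hwv := hav w hw
    subst hwv
    refine ⟨(adj_comm ω u w).mp hw, ?_⟩
    have : (Finset.univ.filter fun x => adj ω u x) = {w} := by
      ext x
      simp only [Finset.mem_filter, Finset.mem_univ, true_and, Finset.mem_singleton]
      exact ⟨fun hx => hav x hx, fun hx => hx ▸ hw⟩
    rw [deg, this, Finset.card_singleton]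
  calc isolCountDel ω v ≤ _ := Finset.card_le_card hsub
    _ ≤ ((Finset.univ.filter fun u => deg ω u = 0) ∪ {v}).card + Nv ω v :=
        Finset.card_union_le _ _
    _ ≤ isolCount ω + 1 + Nv ω v := by
        have := Finset.card_union_le (Finset.univ.filter fun u : Fin n => deg ω u = 0)
          ({v} : Finset (Fin n))
        simp only [Finset.card_singleton] at this
        exact Nat.add_le_add_right this _

lemma sum_Nv_le (ω : EdgeIdx n → Bool) : ∑ v : Fin n, Nv ω v ≤ n := by
  have key : ∀ w : Fin n,
      (∑ v : Fin n, if adj ω v w ∧ deg ω w = 1 then 1 else 0) ≤ 1 := by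
    intro w
    by_cases hw : deg ω w = 1
    · have : (∑ v : Fin n, if adj ω v w ∧ deg ω w = 1 then 1 else 0)
          = (Finset.univ.filter fun v => adj ω w v).card := by
        rw [Finset.card_filter]
        apply Finset.sum_congr rfl
        intro v _
        simp [hw, adj_comm ω v w]
      rw [this]
      exact le_of_eq hw
    · simp [hw]
  calc ∑ v : Fin n, Nv ω v
      = ∑ v : Fin n, ∑ w : Fin n, (if adj ω v w ∧ deg ω w = 1 then 1 else 0) := by
        apply Finset.sum_congr rfl
        intro v _
        rw [Nv, Finset.card_filter]
    _ = ∑ w : Fin n, ∑ v : Fin n, (if adj ω v w ∧ deg ω w = 1 then 1 else 0) :=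
        Finset.sum_comm
    _ ≤ ∑ _w : Fin n, 1 := Finset.sum_le_sum fun w _ => key w
    _ = n := by simp

lemma pointwise_bound (ω : EdgeIdx n → Bool) {θ : ℝ} (hθ : θ ≤ 0) :
    (n : ℝ) * (1 + 2 * θ) * Real.exp (θ * (isolCount ω : ℝ)) ≤
      ∑ v : Fin n, Real.exp (θ * (isolCountDel ω v : ℝ)) := by
  have h1 : ∀ v : Fin n,
      Real.exp (θ * (isolCount ω : ℝ)) * (1 + θ * (1 + (Nv ω v : ℝ))) ≤
        Real.exp (θ * (isolCountDel ω v : ℝ)) := by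
    intro v
    have hle : (isolCountDel ω v : ℝ) ≤ (isolCount ω : ℝ) + 1 + (Nv ω v : ℝ) := by
      exact_mod_cast isolCountDel_le ω v
    have hexp : Real.exp (θ * ((isolCount ω : ℝ) + 1 + (Nv ω v : ℝ))) ≤
        Real.exp (θ * (isolCountDel ω v : ℝ)) := by
      apply Real.exp_le_exp.mpr
      exact mul_le_mul_of_nonpos_left hle hθ
    refine le_trans ?_ hexp
    rw [show θ * ((isolCount ω : ℝ) + 1 + (Nv ω v : ℝ))
        = θ * (isolCount ω : ℝ) + θ * (1 + (Nv ω v : ℝ)) by ring,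
      Real.exp_add]
    apply mul_le_mul_of_nonneg_left _ (Real.exp_nonneg _)
    exact (Real.add_one_le_exp _).trans_eq' (by ring)
  calc (n : ℝ) * (1 + 2 * θ) * Real.exp (θ * (isolCount ω : ℝ))
      ≤ ∑ v : Fin n, Real.exp (θ * (isolCount ω : ℝ)) * (1 + θ * (1 + (Nv ω v : ℝ))) := by
        have hsum : ∑ v : Fin n, Real.exp (θ * (isolCount ω : ℝ)) * (1 + θ * (1 + (Nv ω v : ℝ)))
            = Real.exp (θ * (isolCount ω : ℝ)) *
              ((n : ℝ) * (1 + θ) + θ * ((∑ v : Fin n, Nv ω v : ℕ) : ℝ)) := by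
          rw [← Finset.mul_sum]
          congr 1
          have hterm : ∀ v : Fin n, (1:ℝ) + θ * (1 + (Nv ω v : ℝ))
              = (1 + θ) + θ * (Nv ω v : ℝ) := fun v => by ring
          simp only [hterm]
          rw [Finset.sum_add_distrib, Finset.sum_const, ← Finset.mul_sum,
            Finset.card_univ, Fintype.card_fin]
          push_cast
          ring
        rw [hsum, mul_comm ((n:ℝ) * (1 + 2*θ)) _]
        apply mul_le_mul_of_nonneg_left _ (Real.exp_nonneg _)
        have hN : ((∑ v : Fin n, Nv ω v : ℕ) : ℝ) ≤ (n : ℝ) := by exact_mod_cast sum_Nv_le ω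
        nlinarith [hN, hθ]
    _ ≤ ∑ v : Fin n, Real.exp (θ * (isolCountDel ω v : ℝ)) := Finset.sum_le_sum fun v _ => h1 v

end Combinatorics
section MeasureLemmas

variable {n : ℕ}

/-- Weight of a single Bernoulli coordinate. -/
def wB (p : ℝ) (b : Bool) : ℝ := if b then p else 1 - p

/-- Weight (probability) of a single outcome `ω`. -/
def W (n : ℕ) (p : ℝ) (ω : EdgeIdx n → Bool) : ℝ := ∏ e, wB p (ω e)

lemma wB_nonneg {p : ℝ} (hp0 : 0 ≤ p) (hp1 : p ≤ 1) (b : Bool) : 0 ≤ wB p b := by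
  cases b <;> simp [wB] <;> linarith

lemma W_nonneg {p : ℝ} (hp0 : 0 ≤ p) (hp1 : p ≤ 1) (ω : EdgeIdx n → Bool) :
    0 ≤ W n p ω :=
  Finset.prod_nonneg fun e _ => wB_nonneg hp0 hp1 (ω e)

lemma bern_isProb {p : ℝ} (hp0 : 0 ≤ p) (hp1 : p ≤ 1) : IsProbabilityMeasure (bern p) := by
  constructor
  simp only [bern, Measure.add_apply, Measure.smul_apply, smul_eq_mul,
    Measure.dirac_apply, Set.indicator_univ, Pi.one_apply, mul_one]
  rw [← ENNReal.ofReal_add hp0 (by linarith), show p + (1 - p) = 1 by ring,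
    ENNReal.ofReal_one]

lemma bern_singleton {p : ℝ} (hp0 : 0 ≤ p) (hp1 : p ≤ 1) (b : Bool) :
    (bern p {b}).toReal = wB p b := by
  cases b
  · simp only [bern, Measure.add_apply, Measure.smul_apply, smul_eq_mul,
      Measure.dirac_apply, wB]
    simp [ENNReal.toReal_ofReal (by linarith : (0:ℝ) ≤ 1 - p)]
  · simp only [bern, Measure.add_apply, Measure.smul_apply, smul_eq_mul,
      Measure.dirac_apply, wB]
    simp [ENNReal.toReal_ofReal hp0]

lemma gnp_singleton {p : ℝ} (hp0 : 0 ≤ p) (hp1 : p ≤ 1) (ω : EdgeIdx n → Bool) :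
    ((gnp n p) {ω}).toReal = W n p ω := by
  rw [gnp, ← Set.univ_pi_singleton ω, Measure.pi_pi, ENNReal.toReal_prod]
  exact Finset.prod_congr rfl fun e _ => bern_singleton hp0 hp1 (ω e)

lemma integral_gnp {p : ℝ} (hp0 : 0 ≤ p) (hp1 : p ≤ 1) (f : (EdgeIdx n → Bool) → ℝ) :
    ∫ ω, f ω ∂(gnp n p) = ∑ ω : EdgeIdx n → Bool, W n p ω * f ω := by
  haveI := bern_isProb hp0 hp1
  haveI : IsProbabilityMeasure (gnp n p) := by unfold gnp; infer_instance
  rw [integral_fintype (Integrable.of_finite)]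
  exact Finset.sum_congr rfl fun ω _ => by rw [Measure.real, gnp_singleton hp0 hp1, smul_eq_mul]

lemma sum_W_boolfun {ι : Type} [Fintype ι] [DecidableEq ι] (p : ℝ) :
    ∑ f : ι → Bool, ∏ i, wB p (f i) = 1 := by
  have h := Finset.prod_univ_sum (fun _ : ι => (Finset.univ : Finset Bool))
    (fun _ b => wB p b)
  rw [Fintype.piFinset_univ] at h
  rw [← h, Finset.prod_congr rfl (fun i _ => show ∑ b : Bool, wB p b = 1 by simp [wB]),
    Finset.prod_const_one]

end MeasureLemmas
section Factorize

variable {n : ℕ}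

lemma deg_eq_zero_iff_edges (ω : EdgeIdx n → Bool) (v : Fin n) :
    deg ω v = 0 ↔ ∀ e : EdgeIdx n, (e.val.1 = v ∨ e.val.2 = v) → ω e = false := by
  rw [deg_eq_zero_iff]
  constructor
  · intro h e he
    by_contra hf
    have he' : ω e = true := by
      cases hωe : ω e
      · exact absurd hωe hf
      · rfl
    rcases he with h1 | h2
    · apply h e.val.2
      unfold adj
      have hlt : v < e.val.2 := h1 ▸ e.prop
      rw [dif_pos hlt]
      have hee : (⟨(v, e.val.2), hlt⟩ : EdgeIdx n) = e :=
        Subtype.ext (Prod.ext h1.symm rfl)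
      rw [hee]; exact he'
    · apply h e.val.1
      unfold adj
      have hlt : e.val.1 < v := h2 ▸ e.prop
      rw [dif_neg (asymm hlt), dif_pos hlt]
      have hee : (⟨(e.val.1, v), hlt⟩ : EdgeIdx n) = e :=
        Subtype.ext (Prod.ext rfl h2.symm)
      rw [hee]; exact he'
  · intro h w hadj
    unfold adj at hadj
    by_cases h1 : v < w
    · rw [dif_pos h1] at hadj
      rw [h ⟨(v, w), h1⟩ (Or.inl rfl)] at hadj
      exact Bool.false_ne_true hadj
    · rw [dif_neg h1] at hadj
      by_cases h2 : w < v
      · rw [dif_pos h2] at hadj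
        rw [h ⟨(w, v), h2⟩ (Or.inr rfl)] at hadj
        exact Bool.false_ne_true hadj
      · rw [dif_neg h2] at hadj
        exact hadj

lemma adj_congr (ω ω' : EdgeIdx n → Bool) (v : Fin n)
    (h : ∀ e : EdgeIdx n, ¬ (e.val.1 = v ∨ e.val.2 = v) → ω e = ω' e)
    (u w : Fin n) (hu : u ≠ v) (hw : w ≠ v) : adj ω u w ↔ adj ω' u w := by
  unfold adj
  by_cases h1 : u < w
  · rw [dif_pos h1, dif_pos h1, h ⟨(u, w), h1⟩ (not_or.mpr ⟨hu, hw⟩)]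
  · rw [dif_neg h1, dif_neg h1]
    by_cases h2 : w < u
    · rw [dif_pos h2, dif_pos h2, h ⟨(w, u), h2⟩ (not_or.mpr ⟨hw, hu⟩)]
    · rw [dif_neg h2, dif_neg h2]

lemma isolCountDel_congr (ω ω' : EdgeIdx n → Bool) (v : Fin n)
    (h : ∀ e : EdgeIdx n, ¬ (e.val.1 = v ∨ e.val.2 = v) → ω e = ω' e) :
    isolCountDel ω v = isolCountDel ω' v := by
  unfold isolCountDel
  congr 1
  apply Finset.filter_congr
  intro u _
  have hdd : degDel ω v u = degDel ω' v u := by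
    unfold degDel
    congr 1
    apply Finset.filter_congr
    intro w _
    unfold adjDel
    constructor
    · rintro ⟨ha, h1, h2⟩
      exact ⟨(adj_congr ω ω' v h u w h1 h2).mp ha, h1, h2⟩
    · rintro ⟨ha, h1, h2⟩
      exact ⟨(adj_congr ω ω' v h u w h1 h2).mpr ha, h1, h2⟩
  rw [hdd]

/-- Edges incident to `v` are in bijection with the other vertices. -/
def edgeEquiv (v : Fin n) :
    {e : EdgeIdx n // e.val.1 = v ∨ e.val.2 = v} ≃ {u : Fin n // u ≠ v} where
  toFun e :=
    if h : e.val.val.1 = v then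
      ⟨e.val.val.2, by
        intro hh
        have hlt := e.val.prop
        rw [h, hh] at hlt
        exact lt_irrefl v hlt⟩
    else ⟨e.val.val.1, h⟩
  invFun u :=
    if h : u.val < v then ⟨⟨(u.val, v), h⟩, Or.inr rfl⟩
    else ⟨⟨(v, u.val), lt_of_le_of_ne (not_lt.mp h) (Ne.symm u.prop)⟩, Or.inl rfl⟩
  left_inv e := by
    by_cases h : e.val.val.1 = v
    · simp only [dif_pos h]
      have hnlt : ¬ e.val.val.2 < v := by
        have hlt := e.val.prop
        rw [h] at hlt
        exact asymm hlt
      rw [dif_neg hnlt]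
      exact Subtype.ext (Subtype.ext (Prod.ext h.symm rfl))
    · have h2 : e.val.val.2 = v := e.prop.resolve_left h
      simp only [dif_neg h]
      have hlt : e.val.val.1 < v := by
        have := e.val.prop
        rwa [h2] at this
      rw [dif_pos hlt]
      exact Subtype.ext (Subtype.ext (Prod.ext rfl h2.symm))
  right_inv u := by
    by_cases h : u.val < v
    · simp only [dif_pos h]
      rw [dif_neg (show ¬ ((u.val, v).1 = v) from ne_of_lt h)]
    · simp only [dif_neg h]
      simp

lemma card_incident (v : Fin n) :
    Fintype.card {e : EdgeIdx n // e.val.1 = v ∨ e.val.2 = v} = n - 1 := by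
  rw [Fintype.card_congr (edgeEquiv v)]
  rw [Fintype.card_subtype_compl (fun u : Fin n => u = v)]
  simp [Fintype.card_subtype_eq]

set_option maxHeartbeats 2000000 in
lemma factorize (p : ℝ) (θ : ℝ) (v : Fin n) :
    ∑ ω : EdgeIdx n → Bool, W n p ω *
        (if deg ω v = 0 then Real.exp (θ * (isolCountDel ω v : ℝ)) else 0)
      = (1 - p) ^ (n - 1) *
        ∑ ω : EdgeIdx n → Bool, W n p ω * Real.exp (θ * (isolCountDel ω v : ℝ)) := by
  set q : EdgeIdx n → Prop := fun e => e.val.1 = v ∨ e.val.2 = v with hqdef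
  set E := Equiv.piEquivPiSubtypeProd q (fun _ => Bool) with hEdef
  have hcoord : ∀ (a : {e // q e} → Bool) (b : {e // ¬ q e} → Bool) (e : EdgeIdx n),
      E.symm (a, b) e = if h : q e then a ⟨e, h⟩ else b ⟨e, h⟩ := by
    intro a b e
    rw [hEdef, Equiv.piEquivPiSubtypeProd_symm_apply]
  have hW : ∀ (a : {e // q e} → Bool) (b : {e // ¬ q e} → Bool),
      W n p (E.symm (a, b)) =
        (∏ e : {e // q e}, wB p (a e)) * (∏ e : {e // ¬ q e}, wB p (b e)) := by
    intro a b
    rw [W, ← Fintype.prod_subtype_mul_prod_subtype q (fun e => wB p (E.symm (a, b) e))]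
    congr 1
    · apply Finset.prod_congr rfl
      intro e _
      rw [hcoord, dif_pos e.prop]
    · apply Finset.prod_congr rfl
      intro e _
      rw [hcoord, dif_neg e.prop]
  have hdeg : ∀ (a : {e // q e} → Bool) (b : {e // ¬ q e} → Bool),
      deg (E.symm (a, b)) v = 0 ↔ a = fun _ => false := by
    intro a b
    rw [deg_eq_zero_iff_edges]
    constructor
    · intro h
      funext e
      have := h e.val e.prop
      rwa [hcoord, dif_pos e.prop] at this
    · intro h e he
      rw [hcoord, dif_pos he, h]
  have hYdel : ∀ (a : {e // q e} → Bool) (b : {e // ¬ q e} → Bool),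
      isolCountDel (E.symm (a, b)) v = isolCountDel (E.symm (fun _ => false, b)) v := by
    intro a b
    apply isolCountDel_congr
    intro e he
    rw [hcoord, dif_neg he, hcoord, dif_neg he]
  have key : ∀ F : (EdgeIdx n → Bool) → ℝ,
      ∑ ω : EdgeIdx n → Bool, F ω
        = ∑ a : {e // q e} → Bool, ∑ b : {e // ¬ q e} → Bool, F (E.symm (a, b)) := by
    intro F
    rw [← Equiv.sum_comp E.symm F, Fintype.sum_prod_type]
  set G : ℝ := ∑ b : {e // ¬ q e} → Bool,
    (∏ e : {e // ¬ q e}, wB p (b e)) *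
      Real.exp (θ * (isolCountDel (E.symm (fun _ => false, b)) v : ℝ)) with hGdef
  have hLHS : ∑ ω : EdgeIdx n → Bool, W n p ω *
      (if deg ω v = 0 then Real.exp (θ * (isolCountDel ω v : ℝ)) else 0)
      = (1 - p) ^ (n - 1) * G := by
    rw [key]
    have hstep : ∀ a : {e // q e} → Bool,
        (∑ b : {e // ¬ q e} → Bool, W n p (E.symm (a, b)) *
          (if deg (E.symm (a, b)) v = 0
            then Real.exp (θ * (isolCountDel (E.symm (a, b)) v : ℝ)) else 0))
        = if a = (fun _ => false) then (∏ e : {e // q e}, wB p (a e)) * G else 0 := by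
      intro a
      by_cases ha : a = fun _ => false
      · rw [if_pos ha, hGdef, Finset.mul_sum]
        apply Finset.sum_congr rfl
        intro b _
        rw [hW, if_pos ((hdeg a b).mpr ha), hYdel]
        ring
      · rw [if_neg ha]
        apply Finset.sum_eq_zero
        intro b _
        rw [if_neg (fun hc => ha ((hdeg a b).mp hc)), mul_zero]
    rw [Finset.sum_congr rfl fun a _ => hstep a]
    rw [Finset.sum_eq_single (fun _ => false : {e // q e} → Bool)
      (fun b _ hb => if_neg hb) (fun h => absurd (Finset.mem_univ _) h)]
    rw [if_pos rfl]
    congr 1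
    rw [Finset.prod_congr rfl (fun e _ => show wB p false = 1 - p by simp [wB]),
      Finset.prod_const, Finset.card_univ, card_incident]
  have hRHS : ∑ ω : EdgeIdx n → Bool,
      W n p ω * Real.exp (θ * (isolCountDel ω v : ℝ)) = G := by
    rw [key]
    have hstep : ∀ a : {e // q e} → Bool,
        (∑ b : {e // ¬ q e} → Bool, W n p (E.symm (a, b)) *
          Real.exp (θ * (isolCountDel (E.symm (a, b)) v : ℝ)))
        = (∏ e : {e // q e}, wB p (a e)) * G := by
      intro a
      rw [hGdef, Finset.mul_sum]
      apply Finset.sum_congr rfl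
      intro b _
      rw [hW, hYdel]
      ring
    rw [Finset.sum_congr rfl fun a _ => hstep a, ← Finset.sum_mul, sum_W_boolfun, one_mul]
  rw [hLHS, hRHS]

end Factorize
/-- differential inequality for the mgf `m(θ) = E e^{θY}`, `θ < 0`. -/
theorem deriv_mgf_bound_neg (n : ℕ) (hn : 2 ≤ n) (p : ℝ)
    (hp : p ∈ Set.Ioo (0 : ℝ) 1)
    (μ : ℝ) (hμ : μ = (n : ℝ) * (1 - p) ^ (n - 1))
    (m : ℝ → ℝ) (hm : ∀ θ, m θ = ∫ ω, Real.exp (θ * (isolCount ω : ℝ)) ∂(gnp n p)) :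
    ∀ θ : ℝ, θ < 0 → μ * (1 + 2 * θ) * m θ ≤ deriv m θ := by
  intro θ hθ
  have hp0' : (0 : ℝ) ≤ p := le_of_lt hp.1
  have hp1' : p ≤ 1 := le_of_lt hp.2
  have hm' : ∀ t, m t = ∑ ω : EdgeIdx n → Bool,
      W n p ω * Real.exp (t * (isolCount ω : ℝ)) :=
    fun t => by rw [hm t, integral_gnp hp0' hp1']
  have hder : HasDerivAt m
      (∑ ω : EdgeIdx n → Bool,
        W n p ω * ((isolCount ω : ℝ) * Real.exp (θ * (isolCount ω : ℝ)))) θ := by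
    have hfun : m = fun t => ∑ ω : EdgeIdx n → Bool,
        W n p ω * Real.exp (t * (isolCount ω : ℝ)) := funext hm'
    rw [hfun]
    refine HasDerivAt.fun_sum fun ω _ => ?_
    have h1 : HasDerivAt (fun t : ℝ => t * (isolCount ω : ℝ)) ((isolCount ω : ℝ)) θ :=
      hasDerivAt_mul_const _
    have h3 := (h1.exp).const_mul (W n p ω)
    convert h3 using 1
    exacts [rfl, by ring]
  have hderiv : deriv m θ = ∑ ω : EdgeIdx n → Bool,
      W n p ω * ((isolCount ω : ℝ) * Real.exp (θ * (isolCount ω : ℝ))) := hder.deriv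
  have hpoint : ∀ ω : EdgeIdx n → Bool,
      (isolCount ω : ℝ) * Real.exp (θ * (isolCount ω : ℝ))
        = ∑ v : Fin n,
            (if deg ω v = 0 then Real.exp (θ * (isolCountDel ω v : ℝ)) else 0) := by
    intro ω
    have h1 : ∑ v : Fin n,
        (if deg ω v = 0 then Real.exp (θ * (isolCountDel ω v : ℝ)) else 0)
        = ∑ v : Fin n,
            (if deg ω v = 0 then Real.exp (θ * (isolCount ω : ℝ)) else 0) :=
      Finset.sum_congr rfl fun v _ => by
        by_cases h : deg ω v = 0
        · rw [if_pos h, if_pos h, isolCountDel_eq ω h]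
        · rw [if_neg h, if_neg h]
    rw [h1, ← Finset.sum_filter, Finset.sum_const]
    simp [isolCount, nsmul_eq_mul]
  have step1 : deriv m θ = ∑ v : Fin n, ∑ ω : EdgeIdx n → Bool,
      W n p ω * (if deg ω v = 0 then Real.exp (θ * (isolCountDel ω v : ℝ)) else 0) := by
    rw [hderiv,
      Finset.sum_congr rfl (fun (ω : EdgeIdx n → Bool) _ => by
        rw [hpoint ω, Finset.mul_sum])]
    exact Finset.sum_comm
  have step2 : deriv m θ = (1 - p) ^ (n - 1) *
      ∑ ω : EdgeIdx n → Bool,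
        W n p ω * ∑ v : Fin n, Real.exp (θ * (isolCountDel ω v : ℝ)) := by
    rw [step1, Finset.sum_congr rfl (fun v _ => factorize p θ v), ← Finset.mul_sum]
    congr 1
    rw [Finset.sum_comm]
    exact Finset.sum_congr rfl fun ω _ => by rw [Finset.mul_sum]
  have hineq : (1 - p) ^ (n - 1) *
      ∑ ω : EdgeIdx n → Bool,
        W n p ω * ((n : ℝ) * (1 + 2 * θ) * Real.exp (θ * (isolCount ω : ℝ)))
      ≤ deriv m θ := by
    rw [step2]
    apply mul_le_mul_of_nonneg_left _ (pow_nonneg (by linarith) _)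
    apply Finset.sum_le_sum
    intro ω _
    exact mul_le_mul_of_nonneg_left (pointwise_bound ω (le_of_lt hθ))
      (W_nonneg hp0' hp1' ω)
  refine le_trans (le_of_eq ?_) hineq
  rw [hμ, hm' θ, Finset.mul_sum, Finset.mul_sum]
  exact Finset.sum_congr rfl fun ω _ => by ring

end ErdosRenyiIsolated
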